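/- Let Φ : ℝ → ℝ be strictly convex and differentiable, let s₁,…,s_K ∈ ℝ, and let α ∈ ℝ. Suppose ν̂ = (ν̂₁,…,ν̂_K) minimizes F(ν) = ∑_{k=1}^K (Φ(ν_k) − ν_k s_k) over the monotone cone {ν ∈ ℝ^K : ν₁ ≤ ν₂ ≤ ⋯ ≤ ν_K}. Then the vector μ̂ defined by μ̂_k = max(ν̂_k, α) minimizes F over the truncated cone {μ ∈ ℝ^K : α ≤ μ₁ ≤ μ₂ ≤ ⋯ ≤ μ_K}. -/

import Mathlib

/-- Auxiliary: convexity pair inequality. If `x ≤ a ≤ y` then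
`Φ a + Φ (x + y - a) ≤ Φ x + Φ y` for a convex `Φ`. -/
lemma conv_pair_aux (Φ : ℝ → ℝ) (hΦ : ConvexOn ℝ Set.univ Φ) {x y a : ℝ}
    (hxa : x ≤ a) (hay : a ≤ y) : Φ a + Φ (x + y - a) ≤ Φ x + Φ y := by
  rcases eq_or_lt_of_le (hxa.trans hay) with h | h
  · have hax : a = x := le_antisymm (h ▸ hay) hxa
    have h1 : x + y - a = y := by rw [hax]; ring
    rw [h1, hax]
  · set t : ℝ := (y - a) / (y - x) with ht
    have hyx : (0:ℝ) < y - x := by linarith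
    have ht0 : 0 ≤ t := div_nonneg (by linarith) hyx.le
    have ht1 : t ≤ 1 := by rw [div_le_one hyx]; linarith
    have h1t : 0 ≤ 1 - t := by linarith
    have ha : a = t * x + (1 - t) * y := by
      rw [ht]
      field_simp [hyx.ne']
      ring
    have hb : x + y - a = (1 - t) * x + t * y := by
      rw [ha]; ring
    have e1 := hΦ.2 (Set.mem_univ x) (Set.mem_univ y) ht0 h1t (by ring)
    have e2 := hΦ.2 (Set.mem_univ x) (Set.mem_univ y) h1t ht0 (by ring)
    simp only [smul_eq_mul] at e1 e2
    rw [hb, ha]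
    linarith

/-- If `ν̂` minimizes the isotonic-type objective
`F(ν) = ∑ k, (Φ (ν k) - ν k * s k)` over the monotone cone, then
`μ̂ = fun k => max (ν̂ k) α` minimizes `F` over the truncated cone
`{μ | α ≤ μ₁ ≤ ⋯ ≤ μ_K}`. -/
theorem stmt_0 (K : ℕ) (hK : 1 ≤ K) (Φ : ℝ → ℝ)
    (hΦconv : StrictConvexOn ℝ Set.univ Φ) (hΦdiff : Differentiable ℝ Φ)
    (s : Fin K → ℝ) (α : ℝ) (ν : Fin K → ℝ) (hν_mono : Monotone ν)
    (hν_min : ∀ ν' : Fin K → ℝ, Monotone ν' →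
      ∑ k, (Φ (ν k) - ν k * s k) ≤ ∑ k, (Φ (ν' k) - ν' k * s k)) :
    Monotone (fun k => max (ν k) α) ∧ (∀ k, α ≤ max (ν k) α) ∧
      ∀ μ : Fin K → ℝ, Monotone μ → (∀ k, α ≤ μ k) →
        ∑ k, (Φ (max (ν k) α) - max (ν k) α * s k) ≤ ∑ k, (Φ (μ k) - μ k * s k) := by
  refine ⟨fun j k hjk => max_le_max (hν_mono hjk) le_rfl, fun k => le_max_right _ _, ?_⟩
  intro μ hμ_mono hμα
  set c : Fin K → ℝ := fun k => μ k + ν k - max (ν k) α with hc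
  have hc_mono : Monotone c := by
    intro j k hjk
    have h1 := hν_mono hjk
    have h2 := hμ_mono hjk
    simp only [hc]
    rcases le_total α (ν j) with h3 | h3 <;> rcases le_total α (ν k) with h4 | h4 <;>
      simp only [max_eq_left, max_eq_right, h3, h4] <;> linarith
  have hopt := hν_min c hc_mono
  have key : ∀ k : Fin K,
      (Φ (max (ν k) α) - max (ν k) α * s k) + (Φ (c k) - c k * s k) ≤
      (Φ (ν k) - ν k * s k) + (Φ (μ k) - μ k * s k) := by
    intro k
    rcases le_total α (ν k) with h | h
    · have hmax : max (ν k) α = ν k := max_eq_left h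
      have hck : c k = μ k := by simp only [hc, hmax]; ring
      rw [hmax, hck]
    · have hmax : max (ν k) α = α := max_eq_right h
      have hck : c k = ν k + μ k - α := by simp only [hc, hmax]; ring
      have hconv := conv_pair_aux Φ hΦconv.convexOn h (hμα k)
      have hr : max (ν k) α * s k + c k * s k = ν k * s k + μ k * s k := by
        rw [hmax, hck]; ring
      rw [hmax, hck]
      rw [hmax, hck] at hr
      linarith
  have hsum := Finset.sum_le_sum (fun k (_ : k ∈ Finset.univ) => key k)
  rw [Finset.sum_add_distrib, Finset.sum_add_distrib] at hsum
  linarith
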